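/- If the probability measures F₁, …, F_k on a measurable space (𝒳, 𝒜) are linearly independent as elements of the real vector space of finite signed measures on (𝒳, 𝒜), then the constant Δ*(F₁,…,F_k) = inf over nonempty proper subsets I ⊊ [k], γ ∈ 𝒲_{|I|} and λ ∈ 𝒲_{k−|I|} of d_TV(∑_{i∈I} γᵢ Fᵢ, ∑_{i∈[k]∖I} λᵢ Fᵢ) is strictly positive. -/

import Mathlib

open MeasureTheory Real
open scoped ENNReal

noncomputable section

variable {𝒳 : Type*} [MeasurableSpace 𝒳]

/-- Squared Hellinger distance between two measures. -/
def hellingerSq (P Q : Measure 𝒳) : ℝ :=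
  (1 / 2) * ∫ x, (Real.sqrt ((P.rnDeriv (P + Q) x).toReal)
      - Real.sqrt ((Q.rnDeriv (P + Q) x).toReal)) ^ 2 ∂(P + Q)

/-- Hellinger distance between two measures. -/
def hellinger (P Q : Measure 𝒳) : ℝ := Real.sqrt (hellingerSq P Q)

/-- Hellinger distance between two weight vectors. -/
def hellingerVec {k : ℕ} (w w' : Fin k → ℝ) : ℝ :=
  Real.sqrt ((1 / 2) * ∑ i, (Real.sqrt (w i) - Real.sqrt (w' i)) ^ 2)

/-- Total variation distance. -/
def tvDist (P Q : Measure 𝒳) : ℝ :=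
  ⨆ s : { s : Set 𝒳 // MeasurableSet s }, |(P s.1).toReal - (Q s.1).toReal|

/-- Mixture of measures with real weights. -/
def mix {k : ℕ} (β : Fin k → ℝ) (Q : Fin k → Measure 𝒳) : Measure 𝒳 :=
  ∑ i, ENNReal.ofReal (β i) • Q i

/-- Linear independence of finite measures, viewed in the real vector space of
finite signed measures: the only real linear combination vanishing on every
measurable set is the trivial one. -/
def MeasLinIndep {k : ℕ} (F : Fin k → Measure 𝒳) : Prop :=
  ∀ c : Fin k → ℝ, (∀ s : Set 𝒳, MeasurableSet s → ∑ i, c i * (F i s).toReal = 0) → c = 0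

/-- The constant Δ*(F₁,…,F_k). -/
def Δstar {k : ℕ} (F : Fin k → Measure 𝒳) : ℝ :=
  ⨅ I : { I : Finset (Fin k) // I.Nonempty ∧ I ≠ Finset.univ },
    ⨅ γ : { γ : Fin k → ℝ // (∀ i, 0 ≤ γ i) ∧ ∑ i ∈ I.1, γ i = 1 },
      ⨅ l : { l : Fin k → ℝ // (∀ i, 0 ≤ l i) ∧ ∑ i ∈ I.1ᶜ, l i = 1 },
        tvDist (∑ i ∈ I.1, ENNReal.ofReal (γ.1 i) • F i)
          (∑ i ∈ I.1ᶜ, ENNReal.ofReal (l.1 i) • F i)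

/-- ψ(√r) where ψ(x) = (x−1)/(x+1), with ψ(√∞) = 1. -/
def ψρ (r : ℝ≥0∞) : ℝ :=
  if r = ⊤ then 1 else (Real.sqrt r.toReal - 1) / (Real.sqrt r.toReal + 1)

/-- Ratio b/a in [0,∞] with conventions 0/0 = 1 and a/0 = ∞ for a > 0. -/
def densRatio (a b : ℝ) : ℝ≥0∞ :=
  if a = 0 ∧ b = 0 then 1 else ENNReal.ofReal b / ENNReal.ofReal a

/-- The statistic T(x,q,q') = ∑ᵢ ψ(√(q'(xᵢ)/q(xᵢ))). -/
def Tρ {n : ℕ} (x : Fin n → 𝒳) (q q' : 𝒳 → ℝ) : ℝ :=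
  ∑ i, ψρ (densRatio (q (x i)) (q' (x i)))

/-- The rational points of the simplex, 𝒲_k ∩ ℚ^k. -/
def ratSimplex (k : ℕ) : Set (Fin k → ℝ) :=
  { β | β ∈ stdSimplex ℝ (Fin k) ∧ ∀ i, ∃ r : ℚ, β i = (r : ℝ) }

/-- Mixture density ∑ⱼ βⱼ qⱼ. -/
def mixDens {k : ℕ} (q : Fin k → 𝒳 → ℝ) (β : Fin k → ℝ) : 𝒳 → ℝ :=
  fun x => ∑ j, β j * q j x

/-- Υ(x,p) = sup over the model ℳ_mix(q₁,…,q_k) of T(x,p,·). -/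
def Υρ {n k : ℕ} (q : Fin k → 𝒳 → ℝ) (x : Fin n → 𝒳) (p : 𝒳 → ℝ) : ℝ :=
  ⨆ β : ratSimplex k, Tρ x p (mixDens q β.1)

/-- The set 𝓔(x) of candidate ρ-estimators on the model ℳ_mix(q₁,…,q_k). -/
def rhoEstSet {n k : ℕ} (μ : Measure 𝒳) (q : Fin k → 𝒳 → ℝ) (x : Fin n → 𝒳) :
    Set (Measure 𝒳) :=
  { P | ∃ β ∈ ratSimplex k,
      P = μ.withDensity (fun y => ENNReal.ofReal (mixDens q β y)) ∧
      Υρ q x (mixDens q β) < (⨅ β' : ratSimplex k, Υρ q x (mixDens q β'.1)) + 11.36 }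

/-- Closure of a set of measures with respect to the Hellinger distance. -/
def hellClosure (S : Set (Measure 𝒳)) : Set (Measure 𝒳) :=
  { P | ∀ ε > 0, ∃ Q ∈ S, hellinger P Q < ε }

/-- The Bayes predictor associated with weights α and densities q. -/
def bayesPred {k : ℕ} (α : Fin k → ℝ) (q : Fin k → 𝒳 → ℝ) : 𝒳 → Fin k → ℝ :=
  fun x i => α i * q i x / ∑ j, α j * q j x

/-- The joint distribution Π*_α on 𝒳 × [k] with ℙ(Y = i) = αᵢ and law of X given
Y = i equal to Q i. -/
def jointLaw {k : ℕ} (α : Fin k → ℝ) (Q : Fin k → Measure 𝒳) : Measure (𝒳 × Fin k) :=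
  ∑ i, ENNReal.ofReal (α i) • ((Q i).prod (Measure.dirac i))

/-- Marginal calibration: fᵢ(X) = 𝔼[1_{Y=i} | fᵢ(X)] a.s. for all i. -/
def MarginallyCalibrated {k : ℕ} (f : 𝒳 → Fin k → ℝ) (Pm : Measure (𝒳 × Fin k)) : Prop :=
  ∀ i, (fun ω : 𝒳 × Fin k => f ω.1 i)
    =ᵐ[Pm] Pm[(fun ω : 𝒳 × Fin k => if ω.2 = i then (1 : ℝ) else 0) |
        MeasurableSpace.comap (fun ω : 𝒳 × Fin k => f ω.1 i) inferInstance]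

/-- Canonical calibration: fᵢ(X) = 𝔼[1_{Y=i} | f(X)] a.s. for all i. -/
def CanonicallyCalibrated {k : ℕ} (f : 𝒳 → Fin k → ℝ) (Pm : Measure (𝒳 × Fin k)) : Prop :=
  ∀ i, (fun ω : 𝒳 × Fin k => f ω.1 i)
    =ᵐ[Pm] Pm[(fun ω : 𝒳 × Fin k => if ω.2 = i then (1 : ℝ) else 0) |
        MeasurableSpace.comap (fun ω : 𝒳 × Fin k => f ω.1) inferInstance]

open scoped Classical in
/-- Kullback–Leibler divergence. -/
def klDiv' (P Q : Measure 𝒳) : EReal :=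
  if P ≪ Q ∧ Integrable (fun x => Real.log ((P.rnDeriv Q x).toReal)) P
  then ((∫ x, Real.log ((P.rnDeriv Q x).toReal) ∂P : ℝ) : EReal)
  else ⊤

end

section

variable {𝒳 : Type*} [MeasurableSpace 𝒳]


lemma mixApply' {k : ℕ} (F : Fin k → Measure 𝒳) [∀ i, IsProbabilityMeasure (F i)]
    (J : Finset (Fin k)) (γ : Fin k → ℝ) (s : Set 𝒳) :
    ((∑ i ∈ J, ENNReal.ofReal (γ i) • F i) s).toReal
      = ∑ i ∈ J, max (γ i) 0 * (F i s).toReal := by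
  rw [Measure.coe_finset_sum, Finset.sum_apply, ENNReal.toReal_sum]
  · refine Finset.sum_congr rfl fun i _ => ?_
    rw [Measure.smul_apply, smul_eq_mul, ENNReal.toReal_mul, ENNReal.toReal_ofReal']
  · intro i hi
    rw [Measure.smul_apply, smul_eq_mul]
    exact ENNReal.mul_ne_top ENNReal.ofReal_ne_top (measure_ne_top _ _)

lemma FtoReal_le_one {k : ℕ} (F : Fin k → Measure 𝒳) [∀ i, IsProbabilityMeasure (F i)]
    (i : Fin k) (s : Set 𝒳) : (F i s).toReal ≤ 1 := by
  have h1 : F i s ≤ 1 := (measure_mono (Set.subset_univ s)).trans_eq measure_univ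
  simpa using ENNReal.toReal_mono (by simp) h1

lemma key {k : ℕ} (F : Fin k → Measure 𝒳) [∀ i, IsProbabilityMeasure (F i)]
    (hind : ∀ c : Fin k → ℝ,
      (∀ s : Set 𝒳, MeasurableSet s → ∑ i, c i * (F i s).toReal = 0) → c = 0)
    (I : Finset (Fin k)) (hI : I.Nonempty) (hI' : I ≠ Finset.univ) :
    ∃ ε > 0, ∀ γ l : Fin k → ℝ, (∀ i, 0 ≤ γ i) → ∑ i ∈ I, γ i = 1 →
      (∀ i, 0 ≤ l i) → ∑ i ∈ Iᶜ, l i = 1 →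
      ε ≤ tvDist (∑ i ∈ I, ENNReal.ofReal (γ i) • F i)
        (∑ i ∈ Iᶜ, ENNReal.ofReal (l i) • F i) := by
  classical
  set f : (Fin k → ℝ) × (Fin k → ℝ) → ℝ := fun p =>
    tvDist (∑ i ∈ I, ENNReal.ofReal (p.1 i) • F i)
      (∑ i ∈ Iᶜ, ENNReal.ofReal (p.2 i) • F i) with hf
  -- the terms inside the sup
  set term : (Fin k → ℝ) × (Fin k → ℝ) → Set 𝒳 → ℝ := fun p s =>
    |(∑ i ∈ I, max (p.1 i) 0 * (F i s).toReal)
      - ∑ i ∈ Iᶜ, max (p.2 i) 0 * (F i s).toReal| with hterm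
  have hfeq : ∀ p, f p = ⨆ s : { s : Set 𝒳 // MeasurableSet s }, term p s.1 := by
    intro p
    simp only [hf, tvDist, hterm, mixApply']
  have hbdd : ∀ p, BddAbove (Set.range fun s : { s : Set 𝒳 // MeasurableSet s } => term p s.1) := by
    intro p
    refine ⟨(∑ i ∈ I, max (p.1 i) 0) + ∑ i ∈ Iᶜ, max (p.2 i) 0, ?_⟩
    rintro x ⟨s, rfl⟩
    have hA : ∀ (J : Finset (Fin k)) (q : Fin k → ℝ),
        ∑ i ∈ J, max (q i) 0 * (F i s.1).toReal ≤ ∑ i ∈ J, max (q i) 0 := by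
      intro J q
      refine Finset.sum_le_sum fun i _ => ?_
      exact mul_le_of_le_one_right (le_max_right _ _) (FtoReal_le_one F i s.1)
    have h0 : ∀ (J : Finset (Fin k)) (q : Fin k → ℝ),
        0 ≤ ∑ i ∈ J, max (q i) 0 * (F i s.1).toReal := by
      intro J q
      exact Finset.sum_nonneg fun i _ =>
        mul_nonneg (le_max_right _ _) ENNReal.toReal_nonneg
    calc term p s.1 ≤ |∑ i ∈ I, max (p.1 i) 0 * (F i s.1).toReal|
          + |∑ i ∈ Iᶜ, max (p.2 i) 0 * (F i s.1).toReal| := abs_sub _ _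
      _ ≤ (∑ i ∈ I, max (p.1 i) 0) + ∑ i ∈ Iᶜ, max (p.2 i) 0 := by
          rw [abs_of_nonneg (h0 I p.1), abs_of_nonneg (h0 Iᶜ p.2)]
          exact add_le_add (hA I p.1) (hA Iᶜ p.2)
  have hne : Nonempty { s : Set 𝒳 // MeasurableSet s } := ⟨∅, MeasurableSet.empty⟩
  -- one-sided Lipschitz estimate
  have hlip1 : ∀ p q, f p ≤ f q + (k : ℝ) * dist p q := by
    intro p q
    rw [hfeq p, hfeq q]
    refine ciSup_le fun s => ?_
    have hstep : term p s.1 ≤ term q s.1 + (k : ℝ) * dist p q := by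
      have h1 : ∀ (J : Finset (Fin k)) (a b : Fin k → ℝ),
          |(∑ i ∈ J, max (a i) 0 * (F i s.1).toReal)
            - ∑ i ∈ J, max (b i) 0 * (F i s.1).toReal| ≤ J.card * dist a b := by
        intro J a b
        rw [← Finset.sum_sub_distrib]
        calc |∑ i ∈ J, (max (a i) 0 * (F i s.1).toReal - max (b i) 0 * (F i s.1).toReal)|
            ≤ ∑ i ∈ J, |max (a i) 0 * (F i s.1).toReal - max (b i) 0 * (F i s.1).toReal| :=
              Finset.abs_sum_le_sum_abs _ _
          _ ≤ ∑ i ∈ J, dist a b := by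
              refine Finset.sum_le_sum fun i _ => ?_
              rw [← sub_mul, abs_mul]
              have := abs_max_sub_max_le_abs (a i) (b i) 0
              have h2 : |a i - b i| ≤ dist a b := by
                rw [← Real.dist_eq]; exact dist_le_pi_dist a b i
              calc |max (a i) 0 - max (b i) 0| * |(F i s.1).toReal|
                  ≤ |a i - b i| * 1 := by
                    apply mul_le_mul this _ (abs_nonneg _) (abs_nonneg _)
                    rw [abs_of_nonneg ENNReal.toReal_nonneg]
                    exact FtoReal_le_one F i s.1
                _ ≤ dist a b := by rw [mul_one]; exact h2
          _ = J.card * dist a b := by rw [Finset.sum_const, nsmul_eq_mul]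
      have hd1 : dist p.1 q.1 ≤ dist p q := le_max_left _ _
      have hd2 : dist p.2 q.2 ≤ dist p q := le_max_right _ _
      have habs : |(∑ i ∈ I, max (p.1 i) 0 * (F i s.1).toReal
            - ∑ i ∈ Iᶜ, max (p.2 i) 0 * (F i s.1).toReal)
          - (∑ i ∈ I, max (q.1 i) 0 * (F i s.1).toReal
            - ∑ i ∈ Iᶜ, max (q.2 i) 0 * (F i s.1).toReal)| ≤ (k : ℝ) * dist p q := by
        have := abs_sub (((∑ i ∈ I, max (p.1 i) 0 * (F i s.1).toReal)
            - ∑ i ∈ I, max (q.1 i) 0 * (F i s.1).toReal))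
          (((∑ i ∈ Iᶜ, max (p.2 i) 0 * (F i s.1).toReal)
            - ∑ i ∈ Iᶜ, max (q.2 i) 0 * (F i s.1).toReal))
        calc |(∑ i ∈ I, max (p.1 i) 0 * (F i s.1).toReal
              - ∑ i ∈ Iᶜ, max (p.2 i) 0 * (F i s.1).toReal)
            - (∑ i ∈ I, max (q.1 i) 0 * (F i s.1).toReal
              - ∑ i ∈ Iᶜ, max (q.2 i) 0 * (F i s.1).toReal)|
            = |((∑ i ∈ I, max (p.1 i) 0 * (F i s.1).toReal)
                - ∑ i ∈ I, max (q.1 i) 0 * (F i s.1).toReal)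
              - ((∑ i ∈ Iᶜ, max (p.2 i) 0 * (F i s.1).toReal)
                - ∑ i ∈ Iᶜ, max (q.2 i) 0 * (F i s.1).toReal)| := by ring_nf
          _ ≤ _ := this
          _ ≤ I.card * dist p.1 q.1 + Iᶜ.card * dist p.2 q.2 :=
              add_le_add (h1 I p.1 q.1) (h1 Iᶜ p.2 q.2)
          _ ≤ I.card * dist p q + Iᶜ.card * dist p q :=
              add_le_add (mul_le_mul_of_nonneg_left hd1 (Nat.cast_nonneg _))
                (mul_le_mul_of_nonneg_left hd2 (Nat.cast_nonneg _))
          _ = (k : ℝ) * dist p q := by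
              rw [← add_mul]
              congr 1
              rw [← Nat.cast_add, Finset.card_add_card_compl]
              simp
      calc term p s.1 ≤ term q s.1 + |(∑ i ∈ I, max (p.1 i) 0 * (F i s.1).toReal
            - ∑ i ∈ Iᶜ, max (p.2 i) 0 * (F i s.1).toReal)
          - (∑ i ∈ I, max (q.1 i) 0 * (F i s.1).toReal
            - ∑ i ∈ Iᶜ, max (q.2 i) 0 * (F i s.1).toReal)| := by
            have := abs_sub_abs_le_abs_sub (∑ i ∈ I, max (p.1 i) 0 * (F i s.1).toReal
              - ∑ i ∈ Iᶜ, max (p.2 i) 0 * (F i s.1).toReal)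
              (∑ i ∈ I, max (q.1 i) 0 * (F i s.1).toReal
              - ∑ i ∈ Iᶜ, max (q.2 i) 0 * (F i s.1).toReal)
            simp only [hterm]
            linarith
        _ ≤ term q s.1 + (k : ℝ) * dist p q := by linarith
    refine hstep.trans (add_le_add ?_ le_rfl)
    exact le_ciSup (hbdd q) s
  have hcont : Continuous f := by
    have : LipschitzWith (⟨(k : ℝ), Nat.cast_nonneg _⟩ : NNReal) f := by
      refine LipschitzWith.of_dist_le_mul fun p q => ?_
      rw [Real.dist_eq, abs_sub_le_iff]
      constructor
      · have := hlip1 p q; change _ ≤ (k : ℝ) * dist p q; linarith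
      · have := hlip1 q p; rw [dist_comm q p] at this; change _ ≤ (k : ℝ) * dist p q; linarith
    exact this.continuous
  -- the compact domain
  set K1 : Finset (Fin k) → Set (Fin k → ℝ) := fun J =>
    Set.Icc 0 1 ∩ ({γ | ∑ i ∈ J, γ i = 1} ∩ {γ | ∀ i ∉ J, γ i = 0}) with hK1
  have hK1compact : ∀ J, IsCompact (K1 J) := by
    intro J
    refine isCompact_Icc.inter_right (IsClosed.inter ?_ ?_)
    · exact isClosed_eq (continuous_finset_sum _ fun i _ => continuous_apply i)
        continuous_const
    · have : {γ : Fin k → ℝ | ∀ i ∉ J, γ i = 0}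
          = ⋂ i ∈ {i : Fin k | i ∉ J}, {γ : Fin k → ℝ | γ i = 0} := by
        ext γ; simp
      rw [this]
      exact isClosed_biInter fun i _ => isClosed_eq (continuous_apply i) continuous_const
  have hK1mem : ∀ (J : Finset (Fin k)) (i₀ : Fin k), i₀ ∈ J →
      (fun i => if i = i₀ then (1 : ℝ) else 0) ∈ K1 J := by
    intro J i₀ hi₀
    refine ⟨⟨?_, ?_⟩, ?_, ?_⟩
    · intro i; dsimp; split <;> norm_num
    · intro i; dsimp; split <;> norm_num
    · show ∑ i ∈ J, (if i = i₀ then (1:ℝ) else 0) = 1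
      rw [Finset.sum_ite_eq' J i₀ (fun _ => (1:ℝ))]; simp [hi₀]
    · intro i hi
      simp only [if_neg (fun h : i = i₀ => hi (h ▸ hi₀))]
  have hK : IsCompact ((K1 I) ×ˢ (K1 Iᶜ)) := (hK1compact I).prod (hK1compact Iᶜ)
  obtain ⟨j₀, hj₀⟩ : ∃ j, j ∉ I := by
    by_contra h
    push_neg at h
    exact hI' (Finset.eq_univ_iff_forall.mpr h)
  obtain ⟨i₀, hi₀⟩ := hI
  have hKne : ((K1 I) ×ˢ (K1 Iᶜ)).Nonempty :=
    ⟨((fun i => if i = i₀ then (1:ℝ) else 0), (fun i => if i = j₀ then (1:ℝ) else 0)),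
      hK1mem I i₀ hi₀, hK1mem Iᶜ j₀ (Finset.mem_compl.mpr hj₀)⟩
  obtain ⟨p₀, hp₀K, hmin⟩ := hK.exists_isMinOn hKne hcont.continuousOn
  obtain ⟨hp₀1, hp₀2⟩ := Set.mem_prod.mp hp₀K
  obtain ⟨hp₀1Icc, hp₀1sum, hp₀1zero⟩ := hp₀1
  obtain ⟨hp₀2Icc, hp₀2sum, hp₀2zero⟩ := hp₀2
  have hp₀1nn : ∀ i, 0 ≤ p₀.1 i := fun i => hp₀1Icc.1 i
  have hp₀2nn : ∀ i, 0 ≤ p₀.2 i := fun i => hp₀2Icc.1 i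
  -- positivity of the minimum
  have hpos : 0 < f p₀ := by
    by_contra hle
    push_neg at hle
    have hzero : ∀ s : Set 𝒳, MeasurableSet s →
        ∑ i ∈ I, p₀.1 i * (F i s).toReal = ∑ i ∈ Iᶜ, p₀.2 i * (F i s).toReal := by
      intro s hs
      have hterm_le : term p₀ s ≤ f p₀ := by
        rw [hfeq p₀]
        exact le_ciSup (hbdd p₀) ⟨s, hs⟩
      have habs : |(∑ i ∈ I, max (p₀.1 i) 0 * (F i s).toReal)
          - ∑ i ∈ Iᶜ, max (p₀.2 i) 0 * (F i s).toReal| ≤ 0 := hterm_le.trans hle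
      have := abs_eq_zero.mp (le_antisymm habs (abs_nonneg _))
      have heq := sub_eq_zero.mp this
      calc ∑ i ∈ I, p₀.1 i * (F i s).toReal
          = ∑ i ∈ I, max (p₀.1 i) 0 * (F i s).toReal := by
            refine Finset.sum_congr rfl fun i _ => ?_
            rw [max_eq_left (hp₀1nn i)]
        _ = ∑ i ∈ Iᶜ, max (p₀.2 i) 0 * (F i s).toReal := heq
        _ = ∑ i ∈ Iᶜ, p₀.2 i * (F i s).toReal := by
            refine Finset.sum_congr rfl fun i _ => ?_
            rw [max_eq_left (hp₀2nn i)]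
    set c : Fin k → ℝ := fun i => if i ∈ I then p₀.1 i else -(p₀.2 i) with hc
    have hcz : c = 0 := by
      refine hind c fun s hs => ?_
      rw [← Finset.sum_add_sum_compl I (fun i => c i * (F i s).toReal)]
      have hcI : ∑ i ∈ I, c i * (F i s).toReal = ∑ i ∈ I, p₀.1 i * (F i s).toReal :=
        Finset.sum_congr rfl fun i hi => by rw [hc]; simp [hi]
      have hcIc : ∑ i ∈ Iᶜ, c i * (F i s).toReal = -∑ i ∈ Iᶜ, p₀.2 i * (F i s).toReal := by
        rw [← Finset.sum_neg_distrib]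
        refine Finset.sum_congr rfl fun i hi => ?_
        rw [hc]; simp [Finset.mem_compl.mp hi, neg_mul]
      rw [hcI, hcIc, hzero s hs]
      ring
    have h1 : ∑ i ∈ I, c i = 1 := by
      have h2 : ∑ i ∈ I, c i = ∑ i ∈ I, p₀.1 i :=
        Finset.sum_congr rfl fun i hi => by simp [hc, hi]
      rw [h2]; exact hp₀1sum
    rw [hcz] at h1
    simp at h1
  refine ⟨f p₀, hpos, fun γ l hγ hγs hl hls => ?_⟩
  set γ' : Fin k → ℝ := fun i => if i ∈ I then γ i else 0 with hγ'
  set l' : Fin k → ℝ := fun i => if i ∈ Iᶜ then l i else 0 with hl'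
  have hmemK : (γ', l') ∈ (K1 I) ×ˢ (K1 Iᶜ) := by
    have hbound : ∀ (J : Finset (Fin k)) (q : Fin k → ℝ), (∀ i, 0 ≤ q i) →
        ∑ i ∈ J, q i = 1 →
        (fun i => if i ∈ J then q i else 0) ∈ K1 J := by
      intro J q hq hqs
      refine ⟨⟨fun i => ?_, fun i => ?_⟩, ?_, fun i hi => ?_⟩
      · dsimp; split
        · exact hq i
        · exact le_refl 0
      · dsimp; split
        · rename_i hi
          calc q i ≤ ∑ j ∈ J, q j := Finset.single_le_sum (fun j _ => hq j) hi
            _ = 1 := hqs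
        · norm_num
      · show ∑ i ∈ J, (if i ∈ J then q i else 0) = 1
        rw [Finset.sum_congr rfl fun i hi => if_pos hi]
        exact hqs
      · simp [hi]
    exact ⟨hbound I γ hγ hγs, hbound Iᶜ l hl hls⟩
  have e1 : ∑ i ∈ I, ENNReal.ofReal (γ' i) • F i = ∑ i ∈ I, ENNReal.ofReal (γ i) • F i :=
    Finset.sum_congr rfl fun i hi => by simp [hγ', hi]
  have e2 : ∑ i ∈ Iᶜ, ENNReal.ofReal (l' i) • F i = ∑ i ∈ Iᶜ, ENNReal.ofReal (l i) • F i :=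
    Finset.sum_congr rfl fun i hi => by simp [hl', Finset.mem_compl.mp hi]
  have heqf : f (γ', l') = tvDist (∑ i ∈ I, ENNReal.ofReal (γ i) • F i)
      (∑ i ∈ Iᶜ, ENNReal.ofReal (l i) • F i) := by
    simp only [hf]
    rw [e1, e2]
  rw [← heqf]
  exact hmin hmemK

-- STATEMENT 2
theorem statement2 {k : ℕ} (hk : 2 ≤ k)
    (F : Fin k → Measure 𝒳) [∀ i, IsProbabilityMeasure (F i)]
    (hind : MeasLinIndep F) : 0 < Δstar F := by
  classical
  set I₀ : Finset (Fin k) := {⟨0, by omega⟩} with hI₀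
  have hI₀ne : I₀.Nonempty := ⟨_, Finset.mem_singleton_self _⟩
  have hI₀nu : I₀ ≠ Finset.univ := by
    intro h
    have h1 : (⟨1, by omega⟩ : Fin k) ∈ I₀ := h ▸ Finset.mem_univ _
    rw [hI₀, Finset.mem_singleton, Fin.mk.injEq] at h1
    omega
  haveI hΩ : Nonempty { I : Finset (Fin k) // I.Nonempty ∧ I ≠ Finset.univ } :=
    ⟨⟨I₀, hI₀ne, hI₀nu⟩⟩
  have hkey : ∀ ω : { I : Finset (Fin k) // I.Nonempty ∧ I ≠ Finset.univ },
      ∃ ε > 0, ∀ γ l : Fin k → ℝ, (∀ i, 0 ≤ γ i) → ∑ i ∈ ω.1, γ i = 1 →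
        (∀ i, 0 ≤ l i) → ∑ i ∈ ω.1ᶜ, l i = 1 →
        ε ≤ tvDist (∑ i ∈ ω.1, ENNReal.ofReal (γ i) • F i)
          (∑ i ∈ ω.1ᶜ, ENNReal.ofReal (l i) • F i) :=
    fun ω => key F hind ω.1 ω.2.1 ω.2.2
  choose ε hεpos hεle using hkey
  obtain ⟨ω₀, hω₀⟩ := Finite.exists_min ε
  refine lt_of_lt_of_le (hεpos ω₀) ?_
  rw [Δstar]
  refine le_ciInf fun I => ?_
  obtain ⟨i₁, hi₁⟩ := I.2.1
  obtain ⟨j₁, hj₁⟩ : ∃ j, j ∉ I.1 := by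
    by_contra h
    push_neg at h
    exact I.2.2 (Finset.eq_univ_iff_forall.mpr h)
  haveI : Nonempty { γ : Fin k → ℝ // (∀ i, 0 ≤ γ i) ∧ ∑ i ∈ I.1, γ i = 1 } := by
    refine ⟨⟨fun i => if i = i₁ then 1 else 0, fun i => ?_, ?_⟩⟩
    · dsimp; split <;> norm_num
    · rw [Finset.sum_ite_eq' I.1 i₁ (fun _ => (1:ℝ))]; simp [hi₁]
  haveI : Nonempty { l : Fin k → ℝ // (∀ i, 0 ≤ l i) ∧ ∑ i ∈ I.1ᶜ, l i = 1 } := by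
    refine ⟨⟨fun i => if i = j₁ then 1 else 0, fun i => ?_, ?_⟩⟩
    · dsimp; split <;> norm_num
    · rw [Finset.sum_ite_eq' I.1ᶜ j₁ (fun _ => (1:ℝ))]
      simp [Finset.mem_compl.mpr hj₁]
  refine le_ciInf fun γ => le_ciInf fun l => ?_
  exact (hω₀ I).trans (hεle I γ.1 l.1 γ.2.1 γ.2.2 l.2.1 l.2.2)

end
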